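/- Let R be a commutative ring and A a commutative R-algebra such that the structure map f_A : R → A satisfies the Going-Down property. Then sup{ht(p) + dim_p(A) : p ∈ Spec_e^A(R)} ≤ dim(A), where ht(p) is the height of p in R and dim denotes Krull dimension. -/

import Mathlib

open TensorProduct

noncomputable section

/-- The residue field `κ(p)` of a commutative ring `R` at a prime ideal `p`, realised as the
residue field of the localization of `R` at `p`; it is an `R`-algebra. -/
abbrev Kappa (R : Type*) [CommRing R] (p : Ideal R) [p.IsPrime] : Type _ :=
  IsLocalRing.ResidueField (Localization.AtPrime p)

/-- The fibre ring `κ(p) ⊗_R A` of an `R`-algebra `A` at a prime ideal `p` of `R`. -/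
abbrev FiberRing (R A : Type*) [CommRing R] [CommRing A] [Algebra R A]
    (p : Ideal R) [p.IsPrime] : Type _ :=
  (Kappa R p) ⊗[R] A

/-- A prime `p` of `R` is *effective* with respect to the `R`-algebra `A` if the fibre ring
`κ(p) ⊗_R A` is nonzero. -/
def IsEffective (R A : Type*) [CommRing R] [CommRing A] [Algebra R A]
    (p : PrimeSpectrum R) : Prop :=
  Nontrivial (FiberRing R A p.asIdeal)

/-- `dim_p(A) := dim (κ(p) ⊗_R A)`, the Krull dimension of the fibre ring of `A` at `p`. -/
def fiberDim (R A : Type*) [CommRing R] [CommRing A] [Algebra R A]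
    (p : Ideal R) [p.IsPrime] : WithBot ℕ∞ :=
  ringKrullDim (FiberRing R A p)

/-- `f-dim_R(A) := sup {dim_p(A) : p ∈ Spec_e^A(R)}`, the fibre Krull dimension of `A` over `R`. -/
def fdim (R A : Type*) [CommRing R] [CommRing A] [Algebra R A] : WithBot ℕ∞ :=
  ⨆ p : {p : PrimeSpectrum R // IsEffective R A p}, fiberDim R A p.1.asIdeal

/-- `dim_e^A(R)`, the effective Krull dimension of `R` with respect to `A`: the supremum of
lengths of chains of primes of `R` consisting of effective primes with respect to `A`. -/
def edim (R A : Type*) [CommRing R] [CommRing A] [Algebra R A] : WithBot ℕ∞ :=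
  Order.krullDim {p : PrimeSpectrum R // IsEffective R A p}

/-- A ring homomorphism `f : R → A` satisfies the Going-Down property if for any primes
`p ⊆ q` of `R` and any prime `Q` of `A` with `f⁻¹(Q) = q` there is a prime `P ⊆ Q` of `A`
with `f⁻¹(P) = p`. -/
def SatisfiesGoingDown {R A : Type*} [CommRing R] [CommRing A] (f : R →+* A) : Prop :=
  ∀ p q : Ideal R, p.IsPrime → q.IsPrime → p ≤ q →
    ∀ Q : Ideal A, Q.IsPrime → Q.comap f = q →
      ∃ P : Ideal A, P.IsPrime ∧ P ≤ Q ∧ P.comap f = p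

/-- The transcendence degree (as an extended natural number) of an algebra `L` over `K`:
the supremum of the cardinalities of finite algebraically independent subsets of `L`. -/
def algTrdeg (K L : Type*) [CommRing K] [CommRing L] [Algebra K L] : ℕ∞ :=
  ⨆ s : {s : Finset L // AlgebraicIndependent K (Subtype.val : {x : L // x ∈ s} → L)},
    (s.1.card : ℕ∞)

/-- Transcendence degree along a ring homomorphism. -/
def rhTrdeg {K L : Type*} [CommRing K] [CommRing L] (f : K →+* L) : ℕ∞ :=
  @algTrdeg K L _ _ f.toAlgebra

/-- `t.d.(C : k)`: the supremum, over the primes `q` of `C`, of the transcendence degree of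
`Frac(C/q)` over `k`. -/
def tdRing (k C : Type*) [CommRing k] [CommRing C] [Algebra k C] : ℕ∞ :=
  ⨆ q : PrimeSpectrum C, algTrdeg k (FractionRing (C ⧸ q.asIdeal))

/-- `t.d._p(C : R) := t.d.(κ(p) ⊗_R C : κ(p))`, the transcendence degree of `C` over `R`
at the prime `p`. -/
def tdLocal (R C : Type*) [CommRing R] [CommRing C] [Algebra R C]
    (p : Ideal R) [p.IsPrime] : ℕ∞ :=
  tdRing (Kappa R p) (FiberRing R C p)

/-- `Spec_p(A)`: the primes of `A` contracting to `p` over `R`. -/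
abbrev SpecAt (R A : Type*) [CommRing R] [CommRing A] [Algebra R A] (p : Ideal R) : Type _ :=
  {P : PrimeSpectrum A // P.asIdeal.comap (algebraMap R A) = p}

/-- `ht_p(P)`: the supremum of lengths of chains of primes of `A` contracting to `p`
and ending at `P`. -/
def htLocal (R : Type*) {A : Type*} [CommRing R] [CommRing A] [Algebra R A] {p : Ideal R}
    (P : SpecAt R A p) : ℕ∞ :=
  Order.height P

/-- A `k`-algebra `C` over a field `k` is an AF-ring if
`ht(Q) + t.d.(C/Q : k) = t.d.(C_Q : k)` for every prime `Q` of `C`. -/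
def IsAFRing (k C : Type*) [Field k] [CommRing C] [Algebra k C] : Prop :=
  ∀ Q : PrimeSpectrum C,
    Order.height Q + tdRing k (C ⧸ Q.asIdeal) = tdRing k (Localization.AtPrime Q.asIdeal)

/-- `A` is a fibred AF-ring at a prime `p` of `R`: the fibre ring `κ(p) ⊗_R A` is nonzero
and is an AF-ring over `κ(p)`. -/
def IsFibredAFRingAt (R A : Type*) [CommRing R] [CommRing A] [Algebra R A]
    (p : PrimeSpectrum R) : Prop :=
  Nontrivial (FiberRing R A p.asIdeal) ∧
    IsAFRing (Kappa R p.asIdeal) (FiberRing R A p.asIdeal)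

/-- `A` is a fibred AF-ring over `R`: every nonzero fibre ring `κ(p) ⊗_R A` is an AF-ring
over `κ(p)`. -/
def IsFibredAFRing (R A : Type*) [CommRing R] [CommRing A] [Algebra R A] : Prop :=
  ∀ p : PrimeSpectrum R, Nontrivial (FiberRing R A p.asIdeal) →
    IsAFRing (Kappa R p.asIdeal) (FiberRing R A p.asIdeal)

/-- The extension `Q[n] = Q·C[X₁,…,Xₙ]` of a prime `Q` of `C` to the polynomial ring
in `n` indeterminates; it is again prime. -/
def polyExt {C : Type*} [CommRing C] (n : ℕ) (Q : PrimeSpectrum C) :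
    PrimeSpectrum (MvPolynomial (Fin n) C) :=
  ⟨Q.asIdeal.map MvPolynomial.C, by
    have h : RingHom.ker (MvPolynomial.map (σ := Fin n) (Ideal.Quotient.mk Q.asIdeal)) =
        Q.asIdeal.map MvPolynomial.C := by
      rw [MvPolynomial.ker_map, Ideal.mk_ker]
    rw [← h]
    exact RingHom.ker_isPrime _⟩

/-- `ht(Q[s])` for `s : ℕ∞`: for finite `s = n` it is the height of `Q[n]`, and for
`s = ⊤` it is the supremum over all finite `n` of the heights of the `Q[n]`. -/
def polyExtHeight {C : Type*} [CommRing C] (Q : PrimeSpectrum C) (s : ℕ∞) : ℕ∞ :=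
  WithTop.recTopCoe (⨆ n : ℕ, Order.height (polyExt n Q))
    (fun n => Order.height (polyExt n Q)) s

/-- Wadsworth's invariant
`D(s, d, C) := sup {ht(Q[s]) + min(s, d + t.d.(C/Q : k)) : Q ∈ Spec C}`. -/
def Dinv (k C : Type*) [Field k] [CommRing C] [Algebra k C] (s d : ℕ∞) : ℕ∞ :=
  ⨆ Q : PrimeSpectrum C, polyExtHeight Q s + min s (d + tdRing k (C ⧸ Q.asIdeal))

/-- `D_p(s, d, B) := D(s, d, κ(p) ⊗_R B)`. -/
def DLocal (R B : Type*) [CommRing R] [CommRing B] [Algebra R B]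
    (p : Ideal R) [p.IsPrime] (s d : ℕ∞) : ℕ∞ :=
  Dinv (Kappa R p) (FiberRing R B p) s d



section Aux

variable {R A : Type*} [CommRing R] [CommRing A] [Algebra R A] (p : Ideal R) [p.IsPrime]

lemma kappa_sos' : (algebraMap R (Kappa R p)).SurjectiveOnStalks := by
  rw [IsScalarTower.algebraMap_eq R (Localization.AtPrime p) (Kappa R p)]
  exact (RingHom.surjectiveOnStalks_of_surjective (IsLocalRing.residue_surjective)).comp
    (RingHom.surjectiveOnStalks_of_isLocalization (M := p.primeCompl) _)

lemma kappa_ker' : RingHom.ker (algebraMap R (Kappa R p)) = p := by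
  rw [IsScalarTower.algebraMap_eq R (Localization.AtPrime p) (Kappa R p)]
  have : (algebraMap (Localization.AtPrime p) (Kappa R p)) = IsLocalRing.residue _ := rfl
  rw [this, ← RingHom.comap_ker, IsLocalRing.ker_residue]
  exact Localization.AtPrime.comap_maximalIdeal ..

lemma fiber_comap' (x : PrimeSpectrum (FiberRing R A p)) :
    x.asIdeal.comap (algebraMap R (FiberRing R A p)) = p := by
  rw [IsScalarTower.algebraMap_eq R (Kappa R p) (FiberRing R A p), ← Ideal.comap_comap]
  have h0 : x.asIdeal.comap (algebraMap (Kappa R p) (FiberRing R A p)) = ⊥ :=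
    Ideal.eq_bot_of_prime _
  rw [h0]
  have : (⊥ : Ideal (Kappa R p)).comap (algebraMap R (Kappa R p))
      = RingHom.ker (algebraMap R (Kappa R p)) := rfl
  rw [this, kappa_ker']

/-- The map from the fibre spectrum to `Spec A`. -/
def fiberMap' : PrimeSpectrum (FiberRing R A p) → PrimeSpectrum A :=
  PrimeSpectrum.comap (Algebra.TensorProduct.includeRight (R := R) (A := Kappa R p)
    (B := A)).toRingHom

lemma includeRight_eq' :
    (Algebra.TensorProduct.includeRight (R := R) (A := Kappa R p) (B := A)).toRingHom =
    (Algebra.TensorProduct.comm R A (Kappa R p)).toRingEquiv.toRingHom.comp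
      (algebraMap A (A ⊗[R] Kappa R p)) := by
  ext a
  simp [Algebra.TensorProduct.comm_tmul, Algebra.TensorProduct.algebraMap_apply]

lemma fiberMap_comap' (x : PrimeSpectrum (FiberRing R A p)) :
    (fiberMap' p x).asIdeal.comap (algebraMap R A) = p := by
  show (x.asIdeal.comap _).comap _ = p
  rw [Ideal.comap_comap,
    show (Algebra.TensorProduct.includeRight (R := R) (A := Kappa R p)
        (B := A)).toRingHom.comp (algebraMap R A) = algebraMap R (FiberRing R A p) by
      exact AlgHom.comp_algebraMap
        (Algebra.TensorProduct.includeRight (R := R) (A := Kappa R p) (B := A)), fiber_comap']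

lemma fiberMap_strictMono' : StrictMono (fiberMap' (R := R) (A := A) p) := by
  have hcomp := PrimeSpectrum.comap_comp (algebraMap A (A ⊗[R] Kappa R p))
    (Algebra.TensorProduct.comm R A (Kappa R p)).toRingEquiv.toRingHom
  intro x y hxy
  set e := (Algebra.TensorProduct.comm R A (Kappa R p)).toRingEquiv
  have hfm : ∀ z, fiberMap' (R := R) (A := A) p z =
      PrimeSpectrum.comap (algebraMap A (A ⊗[R] Kappa R p))
        (PrimeSpectrum.comap e.toRingHom z) := by
    intro z
    show PrimeSpectrum.comap _ z = _
    rw [includeRight_eq', hcomp]; rfl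
  have hφmono : PrimeSpectrum.comap e.toRingHom x < PrimeSpectrum.comap e.toRingHom y := by
    constructor
    · exact fun a ha => hxy.le ha
    · intro hle
      have hyx : y.asIdeal ≤ x.asIdeal := by
        intro a ha
        have h1 : e (e.symm a) ∈ y.asIdeal := by rw [RingEquiv.apply_symm_apply]; exact ha
        have h2 : e.symm a ∈ (PrimeSpectrum.comap e.toRingHom y).asIdeal := h1
        have h3 : e.symm a ∈ (PrimeSpectrum.comap e.toRingHom x).asIdeal := hle h2
        have h4 : e.toRingHom (e.symm a) ∈ x.asIdeal := h3
        rwa [show e.toRingHom (e.symm a) = a from e.apply_symm_apply a] at h4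
      exact absurd (le_antisymm hxy.le hyx) hxy.ne
  set u := PrimeSpectrum.comap e.toRingHom x
  set v := PrimeSpectrum.comap e.toRingHom y
  rw [hfm, hfm]
  refine lt_of_le_of_ne (fun a ha => hφmono.le ha) fun heq => ?_
  have hT : PrimeSpectrum.tensorProductTo R A (Kappa R p) u =
      PrimeSpectrum.tensorProductTo R A (Kappa R p) v := by
    unfold PrimeSpectrum.tensorProductTo
    exact Prod.ext heq (Subsingleton.elim _ _)
  have := PrimeSpectrum.isEmbedding_tensorProductTo_of_surjectiveOnStalks_aux
    R A (Kappa R p) (kappa_sos' p) v u hT.symm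
  exact absurd (le_antisymm hφmono.le this) hφmono.ne

lemma gd_lift' (hGD : SatisfiesGoingDown (algebraMap R A)) :
    ∀ (n : ℕ) (d : LTSeries (PrimeSpectrum R)) (Q : PrimeSpectrum A),
      d.length = n → Q.asIdeal.comap (algebraMap R A) = d.last.asIdeal →
      ∃ e : LTSeries (PrimeSpectrum A), e.length = d.length ∧ e.last = Q := by
  intro n
  induction n with
  | zero => exact fun d Q hn _ => ⟨RelSeries.singleton _ Q, by simp [hn], rfl⟩
  | succ n ih =>
    intro d Q hn hQ
    have hne : d.length ≠ 0 := by omega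
    have hlt : d.eraseLast.last < d.last := d.eraseLast_last_rel_last hne
    obtain ⟨P, hP, hPQ, hPc⟩ := hGD d.eraseLast.last.asIdeal d.last.asIdeal
      d.eraseLast.last.isPrime d.last.isPrime hlt.le Q.asIdeal Q.isPrime hQ
    obtain ⟨e', he'l, he'last⟩ := ih d.eraseLast ⟨P, hP⟩ (by simp [hn]) hPc
    have hPltQ : (⟨P, hP⟩ : PrimeSpectrum A) < Q := by
      refine lt_of_le_of_ne hPQ fun h => ?_
      have hPe : P = Q.asIdeal := congrArg PrimeSpectrum.asIdeal h
      rw [hPe, hQ] at hPc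
      exact hlt.ne (PrimeSpectrum.ext hPc.symm)
    refine ⟨e'.snoc Q (by rw [he'last]; exact hPltQ), by simp [he'l, hn], by simp⟩

end Aux

/-- If the structure map `R → A` satisfies Going-Down, then
`sup {ht(p) + dim_p(A) : p ∈ Spec_e^A(R)} ≤ dim A`. -/
theorem stmt_1 (R A : Type*) [CommRing R] [CommRing A] [Algebra R A]
    (hGD : SatisfiesGoingDown (algebraMap R A)) :
    ⨆ p : {p : PrimeSpectrum R // IsEffective R A p},
        ((Order.height p.1 : ℕ∞) : WithBot ℕ∞) + fiberDim R A p.1.asIdeal ≤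
      ringKrullDim A := by
  apply iSup_le
  rintro ⟨p, hp⟩
  haveI : Nontrivial (FiberRing R A p.asIdeal) := hp
  haveI hne1 : Nonempty (PrimeSpectrum (FiberRing R A p.asIdeal)) := inferInstance
  obtain ⟨x0⟩ := hne1
  haveI : Nonempty (PrimeSpectrum A) := ⟨fiberMap' p.asIdeal x0⟩
  rw [show fiberDim R A p.asIdeal
      = Order.krullDim (PrimeSpectrum (FiberRing R A p.asIdeal)) from rfl,
    show ringKrullDim A = Order.krullDim (PrimeSpectrum A) from rfl,
    Order.krullDim_eq_iSup_length, Order.krullDim_eq_iSup_length,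
    ← WithBot.coe_add, WithBot.coe_le_coe,
    Order.height_eq_iSup_last_eq, iSup_subtype']
  haveI : Nonempty {d : LTSeries (PrimeSpectrum R) // d.last = p} :=
    ⟨⟨RelSeries.singleton _ p, rfl⟩⟩
  apply ENat.iSup_add_iSup_le
  intro d c
  set Q := fiberMap' (R := R) (A := A) p.asIdeal c.head with hQdef
  have hQ : Q.asIdeal.comap (algebraMap R A) = d.1.last.asIdeal := by
    rw [fiberMap_comap', d.2]
  obtain ⟨e, helen, helast⟩ := gd_lift' hGD d.1.length d.1 Q rfl hQ
  have hconn : e.last = (c.map _ (fiberMap_strictMono' (R := R) (A := A) p.asIdeal)).head := by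
    rw [helast, LTSeries.head_map]
  set t := e.smash (c.map _ (fiberMap_strictMono' (R := R) (A := A) p.asIdeal)) hconn with ht
  refine le_trans ?_ (le_iSup (fun q : LTSeries (PrimeSpectrum A) => (q.length : ℕ∞)) t)
  have htlen : t.length = e.length + c.length := rfl
  rw [htlen, helen]
  push_cast
  exact le_refl _
end
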